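/- arXiv:1805.03552 — 3 statements merged into one kernel-verified Lean document; each statement's English description precedes it below -/
import Mathlib

section
/- Let G ↷ X and G ↷ Y be p.m.p. actions of a countable group G, let q : X → Y be a G-equivariant measure-preserving map (an extension), and suppose the relatively independent self-joining X ⊗_Y X → Y is relatively ergodic (q is relatively weakly mixing). Let L be a Polish group with a bi-invariant metric, let u, v : G × Y → L be measurable maps, and suppose Φ : X → L is measurable with u(g, q(x)) = Φ(gx) v(g, q(x)) Φ(x)^{-1} for all g ∈ G and a.e. x ∈ X. Then Φ descends to Y: there is a measurable f : Y → L with Φ(x) = f(q(x)) for a.e. x. -/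
open MeasureTheory ProbabilityTheory
open scoped ENNReal symmDiff

/-- Let `q : X → Y` be an extension of p.m.p. actions of a countable group `G`, with
`κ` a disintegration of `μ` over `q`, and suppose `q` is relatively weakly mixing:
every `G`-invariant measurable subset of the relatively independent self-joining
`X ⊗_Y X` (with measure `∫ κ_y ⊗ κ_y dν(y)`) agrees a.e. with a set lifted from `Y`.
Let `L` be a Polish group with a bi-invariant metric, `u v : G × Y → L` measurable,
and `Φ : X → L` measurable with `u(g, q x) = Φ(g x) v(g, q x) Φ(x)⁻¹` for all `g` and
a.e. `x`.  Then `Φ` descends to `Y`: `Φ = f ∘ q` a.e. for some measurable `f`. -/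
theorem descend_of_relatively_weakly_mixing
    {G : Type*} [Group G] [Countable G]
    {X Y : Type*} [MeasurableSpace X] [StandardBorelSpace X]
    [MeasurableSpace Y] [StandardBorelSpace Y]
    (μ : Measure X) [IsProbabilityMeasure μ]
    (ν : Measure Y) [IsProbabilityMeasure ν]
    (S : G → X → X) (T : G → Y → Y)
    (hS_one : ∀ x, S 1 x = x) (hS_mul : ∀ g h x, S (g * h) x = S g (S h x))
    (hS_pmp : ∀ g, MeasurePreserving (S g) μ μ)
    (hT_one : ∀ y, T 1 y = y) (hT_mul : ∀ g h y, T (g * h) y = T g (T h y))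
    (hT_pmp : ∀ g, MeasurePreserving (T g) ν ν)
    (q : X → Y) (hq : MeasurePreserving q μ ν)
    (hq_equiv : ∀ g : G, ∀ᵐ x ∂μ, q (S g x) = T g (q x))
    (κ : Kernel Y X) [IsMarkovKernel κ]
    (hκ_disint : μ = ν.bind (fun y => κ y))
    (hκ_fiber : ∀ᵐ y ∂ν, (κ y) ((q ⁻¹' {y})ᶜ) = 0)
    (relProd : Measure (X × X))
    (h_relProd : relProd = ν.bind (fun y => (κ y).prod (κ y)))
    (h_rwm : ∀ A : Set (X × X), MeasurableSet A →
      (∀ g : G, (fun p : X × X => (S g p.1, S g p.2)) ⁻¹' A =ᵐ[relProd] A) →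
      ∃ B : Set Y, MeasurableSet B ∧ A =ᵐ[relProd] ((fun p : X × X => q p.1) ⁻¹' B))
    {L : Type*} [Group L] [MetricSpace L] [CompleteSpace L]
    [TopologicalSpace.SeparableSpace L] [MeasurableSpace L] [BorelSpace L]
    (h_dist_left : ∀ a b c : L, dist (c * a) (c * b) = dist a b)
    (h_dist_right : ∀ a b c : L, dist (a * c) (b * c) = dist a b)
    (u v : G → Y → L) (hu : ∀ g, Measurable (u g)) (hv : ∀ g, Measurable (v g))
    (Φ : X → L) (hΦ : Measurable Φ)
    (h_main : ∀ g : G, ∀ᵐ x ∂μ, u g (q x) = Φ (S g x) * v g (q x) * (Φ x)⁻¹) :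
    ∃ f : Y → L, Measurable f ∧ ∀ᵐ x ∂μ, Φ x = f (q x) := by
  classical
  have hqm := hq.measurable
  -- measurability of the fibre product kernel
  have hpm : Measurable fun y => (κ y).prod (κ y) := by
    have hfun : (fun y => (κ y).prod (κ y)) = fun y => (κ ×ₖ κ) y := by
      funext y; exact (Kernel.prod_apply κ κ y).symm
    rw [hfun]; exact (κ ×ₖ κ).measurable
  have hWapp : ∀ {A : Set (X × X)}, MeasurableSet A →
      relProd A = ∫⁻ y, ((κ y).prod (κ y)) A ∂ν := by
    intro A hA
    rw [h_relProd, Measure.bind_apply hA hpm.aemeasurable]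
  have hμapp : ∀ {A : Set X}, MeasurableSet A → μ A = ∫⁻ y, κ y A ∂ν := by
    intro A hA
    rw [hκ_disint, Measure.bind_apply hA (Kernel.measurable κ).aemeasurable]
  -- transfer of a.e. statements to the two coordinates of relProd
  have hfst : ∀ {P : X → Prop}, (∀ᵐ x ∂μ, P x) → ∀ᵐ p ∂relProd, P p.1 := by
    intro P hP
    rw [ae_iff] at hP ⊢
    have hNm : MeasurableSet (toMeasurable μ {x | ¬P x}) := measurableSet_toMeasurable _ _
    have hN0 : μ (toMeasurable μ {x | ¬P x}) = 0 := by
      rw [measure_toMeasurable]; exact hP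
    have key : relProd (Prod.fst ⁻¹' toMeasurable μ {x | ¬P x}) = 0 := by
      rw [hWapp (hNm.preimage measurable_fst)]
      have heq : ∀ y, ((κ y).prod (κ y)) (Prod.fst ⁻¹' toMeasurable μ {x | ¬P x})
          = κ y (toMeasurable μ {x | ¬P x}) := by
        intro y
        rw [← Set.prod_univ, Measure.prod_prod, measure_univ, mul_one]
      simp_rw [heq]
      rw [← hμapp hNm]
      exact hN0
    exact measure_mono_null (fun p hp => subset_toMeasurable μ _ hp) key
  have hsnd : ∀ {P : X → Prop}, (∀ᵐ x ∂μ, P x) → ∀ᵐ p ∂relProd, P p.2 := by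
    intro P hP
    rw [ae_iff] at hP ⊢
    have hNm : MeasurableSet (toMeasurable μ {x | ¬P x}) := measurableSet_toMeasurable _ _
    have hN0 : μ (toMeasurable μ {x | ¬P x}) = 0 := by
      rw [measure_toMeasurable]; exact hP
    have key : relProd (Prod.snd ⁻¹' toMeasurable μ {x | ¬P x}) = 0 := by
      rw [hWapp (hNm.preimage measurable_snd)]
      have heq : ∀ y, ((κ y).prod (κ y)) (Prod.snd ⁻¹' toMeasurable μ {x | ¬P x})
          = κ y (toMeasurable μ {x | ¬P x}) := by
        intro y
        rw [← Set.univ_prod, Measure.prod_prod, measure_univ, one_mul]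
      simp_rw [heq]
      rw [← hμapp hNm]
      exact hN0
    exact measure_mono_null (fun p hp => subset_toMeasurable μ _ hp) key
  -- a.e. on relProd, the two points lie in the same fibre
  obtain ⟨eY, heY⟩ := exists_measurableEmbedding_real Y
  have hqq : MeasurableSet {p : X × X | q p.1 = q p.2} := by
    have hset : {p : X × X | q p.1 = q p.2} = {p : X × X | eY (q p.1) = eY (q p.2)} := by
      ext p
      exact ⟨fun h => congrArg eY h, fun h => heY.injective h⟩
    rw [hset]
    have m1 : Measurable fun p : X × X => eY (q p.1) :=
      heY.measurable.comp (hqm.comp measurable_fst)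
    have m2 : Measurable fun p : X × X => eY (q p.2) :=
      heY.measurable.comp (hqm.comp measurable_snd)
    exact MeasureTheory.StronglyMeasurable.measurableSet_eq_fun m1.stronglyMeasurable m2.stronglyMeasurable
  have hfib2 : ∀ᵐ y ∂ν, ((κ y).prod (κ y)) {p : X × X | q p.1 = q p.2}ᶜ = 0 := by
    filter_upwards [hκ_fiber] with y hy
    have hsub : {p : X × X | q p.1 = q p.2}ᶜ ⊆
        (Prod.fst ⁻¹' (q ⁻¹' {y})ᶜ) ∪ (Prod.snd ⁻¹' (q ⁻¹' {y})ᶜ) := by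
      intro p hp
      simp only [Set.mem_compl_iff, Set.mem_setOf_eq] at hp
      rw [Set.mem_union]
      by_contra hc
      push_neg at hc
      obtain ⟨h1, h2⟩ := hc
      simp only [Set.mem_preimage, Set.mem_compl_iff, Set.mem_singleton_iff, not_not] at h1 h2
      exact hp (h1.trans h2.symm)
    refine measure_mono_null hsub (measure_union_null ?_ ?_)
    · rw [← Set.prod_univ, Measure.prod_prod, measure_univ, mul_one]; exact hy
    · rw [← Set.univ_prod, Measure.prod_prod, measure_univ, one_mul]; exact hy
  have hfibW : ∀ᵐ p ∂relProd, q p.1 = q p.2 := by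
    rw [ae_iff]
    have hc : {p : X × X | ¬q p.1 = q p.2} = {p : X × X | q p.1 = q p.2}ᶜ := rfl
    rw [hc, hWapp hqq.compl, lintegral_congr_ae (hfib2.mono fun y hy => hy), lintegral_zero]
  -- invariance of the fibrewise distance
  have hinv : ∀ g : G, ∀ᵐ p ∂relProd,
      dist (Φ (S g p.1)) (Φ (S g p.2)) = dist (Φ p.1) (Φ p.2) := by
    intro g
    filter_upwards [hfst (h_main g), hsnd (h_main g), hfibW] with p h1 h2 hf
    have e1 : Φ (S g p.1) = u g (q p.1) * Φ p.1 * (v g (q p.1))⁻¹ := by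
      rw [h1]; group
    have e2 : Φ (S g p.2) = u g (q p.1) * Φ p.2 * (v g (q p.1))⁻¹ := by
      rw [← hf] at h2
      rw [h2]; group
    rw [e1, e2, h_dist_right, h_dist_left]
  -- distance sub-level sets
  have hD : Measurable fun p : X × X => dist (Φ p.1) (Φ p.2) :=
    (hΦ.comp measurable_fst).dist (hΦ.comp measurable_snd)
  set A : ℚ → Set (X × X) := fun r => {p | dist (Φ p.1) (Φ p.2) ≤ (r : ℝ)} with hA_def
  have hAm : ∀ r : ℚ, MeasurableSet (A r) := fun r => hD measurableSet_Iic
  have hB : ∀ r : ℚ, ∃ B : Set Y, MeasurableSet B ∧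
      A r =ᵐ[relProd] ((fun p : X × X => q p.1) ⁻¹' B) := by
    intro r
    refine h_rwm (A r) (hAm r) ?_
    intro g
    refine Filter.eventuallyEq_set.mpr ?_
    filter_upwards [hinv g] with p hp
    simp only [A, Set.mem_preimage, Set.mem_setOf_eq, hp]
  choose B hBm hBA using hB
  have hsymm : ∀ r : ℚ, ∀ᵐ y ∂ν,
      ((κ y).prod (κ y)) ((A r) ∆ ((fun p : X × X => q p.1) ⁻¹' (B r))) = 0 := by
    intro r
    have hm : MeasurableSet ((A r) ∆ ((fun p : X × X => q p.1) ⁻¹' (B r))) :=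
      (hAm r).symmDiff ((hBm r).preimage (hqm.comp measurable_fst))
    have h0 : relProd ((A r) ∆ ((fun p : X × X => q p.1) ⁻¹' (B r))) = 0 :=
      measure_symmDiff_eq_zero_iff.mpr (hBA r)
    rw [hWapp hm] at h0
    have hmeas : Measurable fun y =>
        ((κ y).prod (κ y)) ((A r) ∆ ((fun p : X × X => q p.1) ⁻¹' (B r))) := by
      have := Kernel.measurable_coe (κ ×ₖ κ) hm
      simpa [Kernel.prod_apply] using this
    exact (lintegral_eq_zero_iff hmeas).mp h0
  -- the key fibrewise statement: `Φ` is a.e. constant on a.e. fibre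
  haveI : Nonempty L := ⟨1⟩
  have hkey : ∀ᵐ y ∂ν, ∃ c : L, κ y {x | ¬Φ x = c} = 0 := by
    have hall : ∀ᵐ y ∂ν, (κ y ((q ⁻¹' {y})ᶜ) = 0) ∧ ∀ r : ℚ,
        ((κ y).prod (κ y)) ((A r) ∆ ((fun p : X × X => q p.1) ⁻¹' (B r))) = 0 :=
      hκ_fiber.and (ae_all_iff.mpr hsymm)
    filter_upwards [hall] with y hy
    obtain ⟨hy1, hy2⟩ := hy
    have hyfull : κ y (q ⁻¹' {y}) = 1 :=
      (prob_compl_eq_zero_iff (hqm (measurableSet_singleton y))).mp hy1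
    -- for all positive rationals, the sub-level set has full fibre measure
    have hone : ∀ r : ℚ, 0 < r → ((κ y).prod (κ y)) (A r) = 1 := by
      intro r hr
      have hval : ((κ y).prod (κ y)) (A r) = κ y (q ⁻¹' B r) := by
        have h1 : ((κ y).prod (κ y)) (A r)
            = ((κ y).prod (κ y)) ((fun p : X × X => q p.1) ⁻¹' B r) :=
          measure_congr (measure_symmDiff_eq_zero_iff.mp (hy2 r))
        have h2 : ((fun p : X × X => q p.1) ⁻¹' B r) = (q ⁻¹' B r) ×ˢ Set.univ := by
          rw [Set.prod_univ]; rfl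
        rw [h1, h2, Measure.prod_prod, measure_univ, mul_one]
      have hdich : κ y (q ⁻¹' B r) = 0 ∨ κ y (q ⁻¹' B r) = 1 := by
        by_cases hyB : y ∈ B r
        · right
          refine le_antisymm prob_le_one ?_
          have hsub : (q ⁻¹' {y}) ⊆ q ⁻¹' B r := by
            intro x hx
            simp only [Set.mem_preimage, Set.mem_singleton_iff] at hx
            simp only [Set.mem_preimage, hx]
            exact hyB
          calc (1 : ℝ≥0∞) = κ y (q ⁻¹' {y}) := hyfull.symm
            _ ≤ κ y (q ⁻¹' B r) := measure_mono hsub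
        · left
          refine measure_mono_null ?_ hy1
          intro x hx
          simp only [Set.mem_preimage] at hx
          simp only [Set.mem_compl_iff, Set.mem_preimage, Set.mem_singleton_iff]
          intro hxy
          rw [hxy] at hx
          exact hyB hx
      -- positivity via a countable cover by small balls
      have hpos : ((κ y).prod (κ y)) (A r) ≠ 0 := by
        have hr3 : (0 : ℝ) < (r : ℝ) / 3 := by positivity
        have hcover : (Set.univ : Set X) ⊆
            ⋃ n, Φ ⁻¹' Metric.ball (TopologicalSpace.denseSeq L n) ((r : ℝ) / 3) := by
          intro x _
          obtain ⟨n, hn⟩ :=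
            (TopologicalSpace.denseRange_denseSeq L).exists_dist_lt (Φ x) hr3
          exact Set.mem_iUnion.mpr ⟨n, by simpa [Metric.mem_ball] using hn⟩
        obtain ⟨n, hn⟩ : ∃ n, κ y (Φ ⁻¹' Metric.ball (TopologicalSpace.denseSeq L n)
            ((r : ℝ) / 3)) ≠ 0 := by
          by_contra hcon
          push_neg at hcon
          have h0 := measure_iUnion_null hcon (μ := κ y)
          have h1 : κ y (Set.univ : Set X) = 0 := measure_mono_null hcover h0
          rw [measure_univ] at h1
          exact one_ne_zero h1
        have hsub : (Φ ⁻¹' Metric.ball (TopologicalSpace.denseSeq L n) ((r : ℝ) / 3)) ×ˢ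
            (Φ ⁻¹' Metric.ball (TopologicalSpace.denseSeq L n) ((r : ℝ) / 3)) ⊆ A r := by
          rintro ⟨x1, x2⟩ ⟨hx1, hx2⟩
          simp only [Set.mem_preimage, Metric.mem_ball] at hx1 hx2
          show dist (Φ x1) (Φ x2) ≤ (r : ℝ)
          have htri : dist (Φ x1) (Φ x2) ≤ dist (Φ x1) (TopologicalSpace.denseSeq L n)
              + dist (TopologicalSpace.denseSeq L n) (Φ x2) := dist_triangle _ _ _
          have hc2 : dist (TopologicalSpace.denseSeq L n) (Φ x2) < (r : ℝ) / 3 := by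
            rw [dist_comm]; exact hx2
          linarith
        intro h0
        have hz : ((κ y).prod (κ y))
            ((Φ ⁻¹' Metric.ball (TopologicalSpace.denseSeq L n) ((r : ℝ) / 3)) ×ˢ
             (Φ ⁻¹' Metric.ball (TopologicalSpace.denseSeq L n) ((r : ℝ) / 3))) = 0 :=
          measure_mono_null hsub h0
        rw [Measure.prod_prod] at hz
        rcases mul_eq_zero.mp hz with h | h
        · exact hn h
        · exact hn h
      rcases hdich with h | h
      · exact absurd (hval.trans h) hpos
      · exact hval.trans h
    -- the diagonal has full fibre measure
    have hdiag : ((κ y).prod (κ y)) {p : X × X | Φ p.1 = Φ p.2}ᶜ = 0 := by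
      have hsub : {p : X × X | Φ p.1 = Φ p.2}ᶜ ⊆ ⋃ n : ℕ, (A (1 / (n + 1)))ᶜ := by
        intro p hp
        simp only [Set.mem_compl_iff, Set.mem_setOf_eq] at hp
        have hd : 0 < dist (Φ p.1) (Φ p.2) := dist_pos.mpr hp
        obtain ⟨n, hn⟩ := exists_nat_one_div_lt hd
        refine Set.mem_iUnion.mpr ⟨n, ?_⟩
        simp only [A, Set.mem_compl_iff, Set.mem_setOf_eq, not_le]
        have hcast : ((1 / (n + 1) : ℚ) : ℝ) = 1 / ((n : ℝ) + 1) := by push_cast; ring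
        rw [hcast]
        exact hn
      refine measure_mono_null hsub (measure_iUnion_null fun n => ?_)
      have hpos : (0 : ℚ) < 1 / (n + 1) := by positivity
      exact (prob_compl_eq_zero_iff (hAm _)).mpr (hone _ hpos)
    -- extract the a.e. constant value via Fubini
    have m1 : Measurable fun p : X × X => Φ p.1 := hΦ.comp measurable_fst
    have m2 : Measurable fun p : X × X => Φ p.2 := hΦ.comp measurable_snd
    have hEm : MeasurableSet {p : X × X | Φ p.1 = Φ p.2} :=
      MeasureTheory.StronglyMeasurable.measurableSet_eq_fun m1.stronglyMeasurable m2.stronglyMeasurable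
    have hfub := (Measure.measure_prod_null hEm.compl).mp hdiag
    haveI : (ae (κ y)).NeBot := ae_neBot.mpr (IsProbabilityMeasure.ne_zero (κ y))
    obtain ⟨x₀, hx₀⟩ := (hfub.mono fun x hx => hx).exists
    refine ⟨Φ x₀, ?_⟩
    have hsub : {x | ¬Φ x = Φ x₀} ⊆ Prod.mk x₀ ⁻¹' {p : X × X | Φ p.1 = Φ p.2}ᶜ := by
      intro x hx
      simp only [Set.mem_preimage, Set.mem_compl_iff, Set.mem_setOf_eq]
      intro h
      exact hx h.symm
    exact measure_mono_null hsub hx₀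
  -- construct the measurable descent `f`
  obtain ⟨e₀, he₀⟩ := exists_measurableEmbedding_real L
  have he_meas : Measurable fun l => Real.arctan (e₀ l) :=
    Real.measurable_arctan.comp he₀.measurable
  have he_inj : Function.Injective fun l => Real.arctan (e₀ l) := fun a b h =>
    he₀.injective (Real.arctan_injective h)
  have he : MeasurableEmbedding fun l => Real.arctan (e₀ l) :=
    he_meas.measurableEmbedding he_inj
  obtain ⟨g', hg'm, hg'e⟩ := he.exists_measurable_extend
    (measurable_id : Measurable (id : L → L)) (fun _ => ⟨1⟩)
  set F : Y → ℝ := fun y => ∫ x, Real.arctan (e₀ (Φ x)) ∂κ y with hF_def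
  have hF : Measurable F := by
    have h1 : StronglyMeasurable
        (Function.uncurry fun (_ : Y) (x : X) => Real.arctan (e₀ (Φ x))) :=
      ((he_meas.comp hΦ).comp measurable_snd).stronglyMeasurable
    exact (h1.integral_kernel_prod_right (κ := κ)).measurable
  refine ⟨fun y => g' (F y), hg'm.comp hF, ?_⟩
  have hYae : ∀ᵐ y ∂ν, κ y {x | ¬Φ x = g' (F (q x))} = 0 := by
    filter_upwards [hkey, hκ_fiber] with y hy hyfib
    obtain ⟨c, hc⟩ := hy
    have hΦc : ∀ᵐ x ∂κ y, Φ x = c := by rw [ae_iff]; exact hc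
    have hqy : ∀ᵐ x ∂κ y, q x = y := by
      rw [ae_iff]
      exact hyfib
    have hFy : F y = Real.arctan (e₀ c) := by
      have hint : ∫ x, Real.arctan (e₀ (Φ x)) ∂κ y
          = ∫ _x, Real.arctan (e₀ c) ∂κ y :=
        integral_congr_ae (hΦc.mono fun x hx => congrArg (fun t => Real.arctan (e₀ t)) hx)
      rw [hF_def]
      simp only []
      rw [hint, integral_const]
      simp
    have hgc : g' (F y) = c := by
      rw [hFy]
      exact congrFun hg'e c
    have hgoal : ∀ᵐ x ∂κ y, Φ x = g' (F (q x)) := by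
      filter_upwards [hΦc, hqy] with x h1 h2
      rw [h1, h2, hgc]
    rw [ae_iff] at hgoal
    exact hgoal
  have hBadm : MeasurableSet {x | ¬Φ x = g' (F (q x))} := by
    have m2 : Measurable fun x => g' (F (q x)) := hg'm.comp (hF.comp hqm)
    have hEq : MeasurableSet {x | Φ x = g' (F (q x))} :=
      MeasureTheory.StronglyMeasurable.measurableSet_eq_fun hΦ.stronglyMeasurable m2.stronglyMeasurable
    exact hEq.compl
  rw [ae_iff, hμapp hBadm, lintegral_congr_ae (hYae.mono fun y hy => hy), lintegral_zero]
end

section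
/- Let G ↷ Z and H ↷ Z be free ergodic p.m.p. actions of countable groups on the same standard probability space generating the same orbit equivalence relation, with rearrangement cocycles u : H × Z → G and v : G × Z → H determined by u(h,z)·z = h·z and v(g,z)·z = g·z. For each z ∈ Z define Φ_z : [0,1]^G → [0,1]^H by Φ_z(b)(h) = b(u(h, h^{-1}z)), and Φ : Z × Y × [0,1]^G → Z × Y × [0,1]^H by Φ(z,y,b) = (z, y, Φ_z(b)). Then Φ is a measure-space isomorphism satisfying Φ(g·(z,y,b)) = v(g,z)·Φ(z,y,b) for all g ∈ G and a.e. (z,y,b); in particular Φ maps G-orbits bijectively onto H-orbits. -/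
open MeasureTheory
open scoped ENNReal unitInterval

/-- `μ` is the product (Bernoulli) measure on `ι → K` with base measure `μK`. -/
def IsProductMeasure {ι K : Type*} [MeasurableSpace K]
    (μK : Measure K) (μ : Measure (ι → K)) : Prop :=
  IsProbabilityMeasure μ ∧
    ∀ (Q : Finset ι) (S : ι → Set K), (∀ i ∈ Q, MeasurableSet (S i)) →
      μ {f | ∀ i ∈ Q, f i ∈ S i} = ∏ i ∈ Q, μK (S i)

/-- The Bernoulli shift action of `G` on `G → K`: `(g • x)(h) = x (g⁻¹ h)`. -/
def bshift {G K : Type*} [Group G] (g : G) (x : G → K) : G → K :=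
  fun h => x (g⁻¹ * h)

section Aux

open Set

/-- Finite-dimensional measurable boxes in a product space. -/
def boxes (ι K : Type*) [MeasurableSpace K] : Set (Set (ι → K)) :=
  {A | ∃ Q : Finset ι, ∃ S : ι → Set K,
    (∀ i ∈ Q, MeasurableSet (S i)) ∧ A = {f | ∀ i ∈ Q, f i ∈ S i}}

lemma measurableSet_boxes {ι K : Type*} [MeasurableSpace K] {A : Set (ι → K)}
    (hA : A ∈ boxes ι K) : MeasurableSet A := by
  obtain ⟨Q, S, hS, rfl⟩ := hA
  have : {f : ι → K | ∀ i ∈ Q, f i ∈ S i} = ⋂ i ∈ Q, (fun f : ι → K => f i) ⁻¹' S i := by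
    ext f; simp
  rw [this]
  exact MeasurableSet.biInter Q.countable_toSet
    fun i hi => (measurable_pi_apply i) (hS i hi)

lemma isPiSystem_boxes {ι K : Type*} [MeasurableSpace K] : IsPiSystem (boxes ι K) := by
  classical
  rintro A ⟨Q, S, hS, rfl⟩ A' ⟨Q', S', hS', rfl⟩ -
  refine ⟨Q ∪ Q', fun i => (if i ∈ Q then S i else univ) ∩ (if i ∈ Q' then S' i else univ),
    ?_, ?_⟩
  · intro i _
    refine MeasurableSet.inter ?_ ?_ <;> split_ifs with h
    · exact hS i h
    · exact MeasurableSet.univ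
    · exact hS' i h
    · exact MeasurableSet.univ
  · ext f
    simp only [mem_inter_iff, mem_setOf_eq, Finset.mem_union]
    constructor
    · rintro ⟨h1, h2⟩ i hi
      constructor <;> split_ifs with h
      · exact h1 i h
      · trivial
      · exact h2 i h
      · trivial
    · intro h
      constructor <;> intro i hi
      · have := (h i (Or.inl hi)).1; rwa [if_pos hi] at this
      · have := (h i (Or.inr hi)).2; rwa [if_pos hi] at this

lemma generateFrom_boxes (ι K : Type*) [MeasurableSpace K] :
    MeasurableSpace.generateFrom (boxes ι K) = MeasurableSpace.pi := by
  apply le_antisymm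
  · exact MeasurableSpace.generateFrom_le fun A hA => measurableSet_boxes hA
  · refine iSup_le fun i => ?_
    rintro A ⟨s, hs, rfl⟩
    apply MeasurableSpace.measurableSet_generateFrom
    refine ⟨{i}, fun _ => s, fun _ _ => hs, ?_⟩
    ext f; simp

/-- Precomposition with a bijection of index sets is measure preserving between
product (Bernoulli) measures. -/
lemma precomp_measurePreserving {ι κ K : Type*} [MeasurableSpace K]
    [Countable ι] [Countable κ]
    {e : κ → ι} (he : Function.Bijective e)
    {μK : Measure K} {μι : Measure (ι → K)} {μκ : Measure (κ → K)}
    (h1 : IsProductMeasure μK μι) (h2 : IsProductMeasure μK μκ) :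
    MeasurePreserving (fun c : ι → K => fun k => c (e k)) μι μκ := by
  classical
  haveI := h1.1; haveI := h2.1
  have hf : Measurable (fun c : ι → K => fun k => c (e k)) :=
    measurable_pi_iff.mpr fun k => measurable_pi_apply (e k)
  refine ⟨hf, ?_⟩
  haveI : IsProbabilityMeasure (Measure.map (fun c : ι → K => fun k => c (e k)) μι) :=
    Measure.isProbabilityMeasure_map hf.aemeasurable
  refine ext_of_generate_finite (boxes κ K) (generateFrom_boxes κ K).symm isPiSystem_boxes
    ?_ (by simp)
  rintro A ⟨Q, S, hS, rfl⟩
  rw [Measure.map_apply hf (measurableSet_boxes ⟨Q, S, hS, rfl⟩), h2.2 Q S hS]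
  set einv : ι → κ := fun i => (Equiv.ofBijective e he).symm i with heinv
  have hlinv : ∀ k, einv (e k) = k := fun k => (Equiv.ofBijective e he).symm_apply_apply k
  have hpre : (fun c : ι → K => fun k => c (e k)) ⁻¹' {f | ∀ k ∈ Q, f k ∈ S k}
      = {c : ι → K | ∀ i ∈ Q.image e, c i ∈ S (einv i)} := by
    ext c
    simp only [mem_preimage, mem_setOf_eq, Finset.mem_image]
    constructor
    · rintro h i ⟨k, hk, rfl⟩
      rw [hlinv]; exact h k hk
    · intro h k hk
      have := h (e k) ⟨k, hk, rfl⟩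
      rwa [hlinv] at this
  rw [hpre, h1.2 (Q.image e) (fun i => S (einv i)) ?_]
  · rw [Finset.prod_image (fun k _ k' _ h => he.1 h)]
    exact Finset.prod_congr rfl fun k hk => by rw [hlinv]
  · rintro i hi
    obtain ⟨k, hk, rfl⟩ := Finset.mem_image.1 hi
    simpa [hlinv k] using hS k hk

end Aux

/-- Let `G ↷ Z` and `H ↷ Z` be free ergodic p.m.p. actions with the same orbits and
rearrangement cocycles `u, v`.  With `Φ_z(b)(h) = b (u (h, h⁻¹ z))` and
`Φ(z,y,b) = (z, y, Φ_z(b))`, the map `Φ : Z × Y × [0,1]^G → Z × Y × [0,1]^H` is a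
measure-space isomorphism satisfying `Φ(g·(z,y,b)) = v(g,z)·Φ(z,y,b)`; in particular
it maps `G`-orbits bijectively onto `H`-orbits. -/
theorem rearrangement_orbit_equivalence
    {G H Z Y : Type*} [Group G] [Countable G] [Group H] [Countable H]
    [MeasurableSpace Z] [StandardBorelSpace Z]
    [MeasurableSpace Y] [StandardBorelSpace Y]
    (μZ : Measure Z) [IsProbabilityMeasure μZ]
    (μY : Measure Y) [IsProbabilityMeasure μY]
    (a : G → Z → Z) (b : H → Z → Z)
    (ha_one : ∀ z, a 1 z = z) (ha_mul : ∀ g g' z, a (g * g') z = a g (a g' z))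
    (hb_one : ∀ z, b 1 z = z) (hb_mul : ∀ h h' z, b (h * h') z = b h (b h' z))
    (ha_pmp : ∀ g, MeasurePreserving (a g) μZ μZ)
    (hb_pmp : ∀ h, MeasurePreserving (b h) μZ μZ)
    (ha_erg : ∀ A : Set Z, MeasurableSet A → (∀ g : G, a g ⁻¹' A =ᵐ[μZ] A) →
      μZ A = 0 ∨ μZ A = 1)
    (hb_erg : ∀ A : Set Z, MeasurableSet A → (∀ h : H, b h ⁻¹' A =ᵐ[μZ] A) →
      μZ A = 0 ∨ μZ A = 1)
    (ha_free : ∀ g z, a g z = z → g = 1)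
    (hb_free : ∀ h z, b h z = z → h = 1)
    (h_orbits : ∀ z g, ∃ h : H, b h z = a g z)
    (h_orbits' : ∀ z h, ∃ g : G, a g z = b h z)
    (u : H → Z → G) (hu : ∀ h z, a (u h z) z = b h z)
    (v : G → Z → H) (hv : ∀ g z, b (v g z) z = a g z)
    (aY : G → Y → Y)
    (haY_one : ∀ y, aY 1 y = y) (haY_mul : ∀ g g' y, aY (g * g') y = aY g (aY g' y))
    (haY_pmp : ∀ g, MeasurePreserving (aY g) μY μY)
    (μG : Measure (G → I)) (hμG : IsProductMeasure (volume : Measure I) μG)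
    (μH : Measure (H → I)) (hμH : IsProductMeasure (volume : Measure I) μH) :
    Function.Bijective
      (fun p : Z × Y × (G → I) =>
        (p.1, p.2.1, fun h : H => p.2.2 (u h (b h⁻¹ p.1)))) ∧
    MeasurePreserving
      (fun p : Z × Y × (G → I) =>
        (p.1, p.2.1, fun h : H => p.2.2 (u h (b h⁻¹ p.1))))
      (μZ.prod (μY.prod μG)) (μZ.prod (μY.prod μH)) ∧
    ∀ (g : G) (p : Z × Y × (G → I)),
      (fun p : Z × Y × (G → I) =>
          (p.1, p.2.1, fun h : H => p.2.2 (u h (b h⁻¹ p.1))))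
        (a g p.1, aY g p.2.1, bshift g p.2.2)
      = (fun q : Z × Y × (H → I) =>
          (b (v g p.1) q.1, aY (u (v g p.1) q.1) q.2.1, bshift (v g p.1) q.2.2))
        ((fun p : Z × Y × (G → I) =>
          (p.1, p.2.1, fun h : H => p.2.2 (u h (b h⁻¹ p.1)))) p) := by
  classical
  haveI := hμG.1; haveI := hμH.1
  -- cancellation lemmas from freeness
  have acancel : ∀ (g g' : G) (z : Z), a g z = a g' z → g = g' := by
    intro g g' z hgg
    have h1 : a (g'⁻¹ * g) z = z := by
      rw [ha_mul, hgg, ← ha_mul, inv_mul_cancel, ha_one]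
    have := ha_free _ _ h1
    exact (inv_mul_eq_one.mp this).symm
  have bcancel : ∀ (h h' : H) (z : Z), b h z = b h' z → h = h' := by
    intro h h' z hhh
    have h1 : b (h'⁻¹ * h) z = z := by
      rw [hb_mul, hhh, ← hb_mul, inv_mul_cancel, hb_one]
    have := hb_free _ _ h1
    exact (inv_mul_eq_one.mp this).symm
  have hainv : ∀ (g : G) (z : Z), a g (a g⁻¹ z) = z := by
    intro g z; rw [← ha_mul, mul_inv_cancel, ha_one]
  have hbinv : ∀ (h : H) (z : Z), b h (b h⁻¹ z) = z := by
    intro h z; rw [← hb_mul, mul_inv_cancel, hb_one]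
  have uuniq : ∀ (g : G) (h : H) (z : Z), a g z = b h z → u h z = g := by
    intro g h z hgh
    exact acancel _ _ z (by rw [hu, hgh])
  have vuniq : ∀ (g : G) (h : H) (z : Z), b h z = a g z → v g z = h := by
    intro g h z hgh
    exact bcancel _ _ z (by rw [hv, hgh])
  -- φ z h = u h (b h⁻¹ z), ψ z g = (v g⁻¹ z)⁻¹
  have hφ_a : ∀ (z : Z) (h : H), a (u h (b h⁻¹ z)) (b h⁻¹ z) = z := by
    intro z h; rw [hu]; exact hbinv h z
  have hφinv : ∀ (z : Z) (h : H), a (u h (b h⁻¹ z))⁻¹ z = b h⁻¹ z := by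
    intro z h
    have h0 := hφ_a z h
    calc a (u h (b h⁻¹ z))⁻¹ z
        = a (u h (b h⁻¹ z))⁻¹ (a (u h (b h⁻¹ z)) (b h⁻¹ z)) := by rw [h0]
      _ = b h⁻¹ z := by rw [← ha_mul, inv_mul_cancel, ha_one]
  have φψ : ∀ (z : Z) (g : G), u (v g⁻¹ z)⁻¹ (b ((v g⁻¹ z)⁻¹)⁻¹ z) = g := by
    intro z g
    apply uuniq
    rw [hbinv, inv_inv, hv, hainv]
  have ψφ : ∀ (z : Z) (h : H), (v (u h (b h⁻¹ z))⁻¹ z)⁻¹ = h := by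
    intro z h
    have : v (u h (b h⁻¹ z))⁻¹ z = h⁻¹ := vuniq _ _ _ (hφinv z h).symm
    rw [this, inv_inv]
  have φbij : ∀ z : Z, Function.Bijective (fun h : H => u h (b h⁻¹ z)) := by
    intro z
    exact Function.bijective_iff_has_inverse.mpr
      ⟨fun g => (v g⁻¹ z)⁻¹, fun h => ψφ z h, fun g => φψ z g⟩
  -- fiber measurability
  have hfiber : ∀ (h : H) (g : G), MeasurableSet {z : Z | u h (b h⁻¹ z) = g} := by
    intro h g
    obtain ⟨eR, heR⟩ := MeasureTheory.exists_measurableEmbedding_real Z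
    have hset : {z : Z | u h (b h⁻¹ z) = g} = {z : Z | eR (a g (b h⁻¹ z)) = eR z} := by
      ext z
      simp only [Set.mem_setOf_eq]
      constructor
      · intro hz
        rw [← hz]
        congr 1
        exact hφ_a z h
      · intro hz
        have h2 := heR.injective hz
        exact uuniq g h (b h⁻¹ z) (by rw [h2, hbinv])
    rw [hset]
    exact measurableSet_eq_fun
      (heR.measurable.comp ((ha_pmp g).measurable.comp (hb_pmp h⁻¹).measurable))
      heR.measurable
  -- measurability of the fiberwise map, jointly in (z, (y, c))
  have hTmeas : Measurable (fun p : Z × (Y × (G → I)) =>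
      ((p.2.1, fun h : H => p.2.2 (u h (b h⁻¹ p.1))) : Y × (H → I))) := by
    refine Measurable.prodMk measurable_snd.fst ?_
    refine measurable_pi_iff.mpr fun h => ?_
    intro t ht
    have hdecomp : (fun p : Z × (Y × (G → I)) => p.2.2 (u h (b h⁻¹ p.1))) ⁻¹' t
        = ⋃ g : G, ((fun p : Z × (Y × (G → I)) => p.1) ⁻¹' {z : Z | u h (b h⁻¹ z) = g})
            ∩ ((fun p : Z × (Y × (G → I)) => p.2.2 g) ⁻¹' t) := by
      ext p
      simp only [Set.mem_preimage, Set.mem_iUnion, Set.mem_inter_iff, Set.mem_setOf_eq]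
      constructor
      · intro hp; exact ⟨u h (b h⁻¹ p.1), rfl, hp⟩
      · rintro ⟨g, hg, hp⟩; rw [hg]; exact hp
    rw [hdecomp]
    exact MeasurableSet.iUnion fun g =>
      ((hfiber h g).preimage measurable_fst).inter
        (((measurable_pi_apply g).comp measurable_snd.snd) ht)
  -- the three parts
  refine ⟨?_, ?_, ?_⟩
  · -- bijectivity
    refine Function.bijective_iff_has_inverse.mpr
      ⟨fun q : Z × Y × (H → I) => (q.1, q.2.1, fun g : G => q.2.2 (v g⁻¹ q.1)⁻¹), ?_, ?_⟩
    · rintro ⟨z, y, c⟩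
      refine Prod.ext rfl (Prod.ext rfl ?_)
      funext g
      show c (u (v g⁻¹ z)⁻¹ (b ((v g⁻¹ z)⁻¹)⁻¹ z)) = c g
      rw [φψ]
    · rintro ⟨z, y, d⟩
      refine Prod.ext rfl (Prod.ext rfl ?_)
      funext h
      show d (v (u h (b h⁻¹ z))⁻¹ z)⁻¹ = d h
      rw [ψφ]
  · -- measure preservation
    have key : MeasurePreserving
        (fun p : Z × (Y × (G → I)) =>
          ((p.1, (p.2.1, fun h : H => p.2.2 (u h (b h⁻¹ p.1)))) : Z × (Y × (H → I))))
        (μZ.prod (μY.prod μG)) (μZ.prod (μY.prod μH)) := by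
      refine MeasurePreserving.skew_product (MeasurePreserving.id μZ)
        (g := fun z (w : Y × (G → I)) => ((w.1, fun h : H => w.2 (u h (b h⁻¹ z))) : Y × (H → I)))
        hTmeas (Filter.Eventually.of_forall fun z => ?_)
      have := ((MeasurePreserving.id μY).prod
        (precomp_measurePreserving (φbij z) hμG hμH)).map_eq
      exact this
    exact key
  · -- equivariance
    rintro g ⟨z, y, c⟩
    refine Prod.ext ?_ (Prod.ext ?_ ?_)
    · exact (hv g z).symm
    · show aY g y = aY (u (v g z) z) y
      rw [uuniq g (v g z) z (hv g z).symm]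
    · funext h
      show c (g⁻¹ * u h (b h⁻¹ (a g z))) = c (u ((v g z)⁻¹ * h) (b ((v g z)⁻¹ * h)⁻¹ z))
      congr 1
      have hpt : b ((v g z)⁻¹ * h)⁻¹ z = b h⁻¹ (a g z) := by
        rw [mul_inv_rev, inv_inv, hb_mul, hv]
      rw [hpt]
      refine (uuniq (g⁻¹ * u h (b h⁻¹ (a g z))) ((v g z)⁻¹ * h) _ ?_).symm
      rw [ha_mul, hu, hbinv, hb_mul, hbinv, ← ha_mul, inv_mul_cancel, ha_one,
        ← hv g z, ← hb_mul, inv_mul_cancel, hb_one]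
end

section
/- For each z ∈ Z, the map h ↦ u(h, h^{-1}z) is a bijection from H to G, and consequently the map Φ_z : [0,1]^G → [0,1]^H given by Φ_z(b)(h) = b(u(h, h^{-1}z)) is a measure-preserving bijection from ([0,1]^G, Lebesgue product measure) to ([0,1]^H, Lebesgue product measure). Moreover Φ_{gz}(g·b) = v(g,z)·Φ_z(b) for all g ∈ G, where G and H act on [0,1]^G and [0,1]^H by Bernoulli shift. -/
open MeasureTheory
open scoped ENNReal unitInterval

/-- Let `G ↷ Z` and `H ↷ Z` be free actions of countable groups with identical orbits,
with rearrangement cocycles `u : H × Z → G` and `v : G × Z → H`.  Then for each `z`,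
the map `h ↦ u(h, h⁻¹ z)` is a bijection `H → G`; consequently
`Φ_z : [0,1]^G → [0,1]^H`, `Φ_z(b)(h) = b (u (h, h⁻¹ z))`, is a measure-preserving
bijection for the Lebesgue product measures, and `Φ_{g z}(g·b) = v(g,z)·Φ_z(b)` for
all `g`, where the groups act by Bernoulli shift. -/
theorem rearrangement_bijection
    {G H Z : Type*} [Group G] [Countable G] [Group H] [Countable H]
    [MeasurableSpace Z] [StandardBorelSpace Z]
    (μZ : Measure Z) [IsProbabilityMeasure μZ]
    (a : G → Z → Z) (b : H → Z → Z)
    (ha_one : ∀ z, a 1 z = z) (ha_mul : ∀ g g' z, a (g * g') z = a g (a g' z))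
    (hb_one : ∀ z, b 1 z = z) (hb_mul : ∀ h h' z, b (h * h') z = b h (b h' z))
    (ha_pmp : ∀ g, MeasurePreserving (a g) μZ μZ)
    (hb_pmp : ∀ h, MeasurePreserving (b h) μZ μZ)
    (ha_free : ∀ g z, a g z = z → g = 1)
    (hb_free : ∀ h z, b h z = z → h = 1)
    (h_orbits : ∀ z g, ∃ h : H, b h z = a g z)
    (h_orbits' : ∀ z h, ∃ g : G, a g z = b h z)
    (u : H → Z → G) (hu : ∀ h z, a (u h z) z = b h z)
    (v : G → Z → H) (hv : ∀ g z, b (v g z) z = a g z)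
    (μG : Measure (G → I)) (hμG : IsProductMeasure (volume : Measure I) μG)
    (μH : Measure (H → I)) (hμH : IsProductMeasure (volume : Measure I) μH) :
    ∀ z : Z,
      Function.Bijective (fun h : H => u h (b h⁻¹ z)) ∧
      Function.Bijective (fun (x : G → I) (h : H) => x (u h (b h⁻¹ z))) ∧
      MeasurePreserving (fun (x : G → I) (h : H) => x (u h (b h⁻¹ z))) μG μH ∧
      ∀ (g : G) (x : G → I),
        (fun h : H => (bshift g x) (u h (b h⁻¹ (a g z))))
          = bshift (v g z) (fun h : H => x (u h (b h⁻¹ z))) := by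
  classical
  -- basic group-action cancellation facts
  have ha_inv : ∀ (g : G) (z : Z), a g⁻¹ (a g z) = z := fun g z => by
    rw [← ha_mul, inv_mul_cancel, ha_one]
  have hb_inv : ∀ (h : H) (z : Z), b h⁻¹ (b h z) = z := fun h z => by
    rw [← hb_mul, inv_mul_cancel, hb_one]
  have ha_cancel : ∀ (g g' : G) (z : Z), a g z = a g' z → g = g' := by
    intro g g' z hgg
    have h1 : a (g'⁻¹ * g) z = z := by rw [ha_mul, hgg, ← ha_mul, inv_mul_cancel, ha_one]
    have h2 := ha_free _ _ h1
    rw [inv_mul_eq_one] at h2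
    exact h2.symm
  have hb_cancel : ∀ (h h' : H) (z : Z), b h z = b h' z → h = h' := by
    intro h h' z hhh
    have h1 : b (h'⁻¹ * h) z = z := by rw [hb_mul, hhh, ← hb_mul, inv_mul_cancel, hb_one]
    have h2 := hb_free _ _ h1
    rw [inv_mul_eq_one] at h2
    exact h2.symm
  -- the key identity for φ z h := u h (b h⁻¹ z)
  have hφa : ∀ (z : Z) (h : H), a (u h (b h⁻¹ z)) (b h⁻¹ z) = z := by
    intro z h
    rw [hu, ← hb_mul, mul_inv_cancel, hb_one]
  -- bijectivity of φ z for every z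
  have hbij : ∀ z : Z, Function.Bijective (fun h : H => u h (b h⁻¹ z)) := by
    intro z
    constructor
    · intro h h' hhh
      simp only at hhh
      have e1 : b h⁻¹ z = a (u h (b h⁻¹ z))⁻¹ z := by
        have := congrArg (a (u h (b h⁻¹ z))⁻¹) (hφa z h)
        rwa [ha_inv] at this
      have e2 : b h'⁻¹ z = a (u h' (b h'⁻¹ z))⁻¹ z := by
        have := congrArg (a (u h' (b h'⁻¹ z))⁻¹) (hφa z h')
        rwa [ha_inv] at this
      have e3 : b h⁻¹ z = b h'⁻¹ z := by rw [e1, e2, hhh]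
      have := hb_cancel _ _ _ e3
      exact inv_injective this
    · intro g
      obtain ⟨h₀, hh₀⟩ := h_orbits z g⁻¹
      refine ⟨h₀⁻¹, ?_⟩
      have hw : b h₀⁻¹⁻¹ z = a g⁻¹ z := by rw [inv_inv, hh₀]
      have key : a (u h₀⁻¹ (b h₀⁻¹⁻¹ z)) (b h₀⁻¹⁻¹ z) = a g (b h₀⁻¹⁻¹ z) := by
        rw [hφa z h₀⁻¹]
        rw [hw, ← ha_mul, mul_inv_cancel, ha_one]
      exact ha_cancel _ _ _ key
  intro z
  refine ⟨hbij z, ?_, ?_, ?_⟩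
  -- the equiv H ≃ G
  · set e : H ≃ G := Equiv.ofBijective _ (hbij z) with he
    rw [Function.bijective_iff_has_inverse]
    refine ⟨fun y g => y (e.symm g), ?_, ?_⟩
    · intro x
      funext g
      exact congrArg x (e.apply_symm_apply g)
    · intro y
      funext h
      exact congrArg y (e.symm_apply_apply h)
  · -- measure preserving
    set e : H ≃ G := Equiv.ofBijective _ (hbij z) with he
    have hee : ∀ h : H, u h (b h⁻¹ z) = e h := fun h => rfl
    have hmeas : Measurable (fun (x : G → I) (h : H) => x (u h (b h⁻¹ z))) :=
      measurable_pi_iff.mpr fun h => measurable_pi_apply _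
    refine ⟨hmeas, ?_⟩
    haveI := hμG.1
    haveI := hμH.1
    haveI : IsProbabilityMeasure (μG.map (fun (x : G → I) (h : H) => x (u h (b h⁻¹ z)))) :=
      Measure.isProbabilityMeasure_map hmeas.aemeasurable
    have hgen : (MeasurableSpace.pi : MeasurableSpace (H → I)) =
        MeasurableSpace.generateFrom
          (squareCylinders fun _ : H => {s : Set I | MeasurableSet s}) :=
      generateFrom_squareCylinders.symm
    have hpisys : IsPiSystem (squareCylinders fun _ : H => {s : Set I | MeasurableSet s}) :=
      isPiSystem_squareCylinders (fun _ => MeasurableSpace.isPiSystem_measurableSet)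
        (fun _ => by simp only [Set.mem_setOf_eq]; exact MeasurableSet.univ)
    refine ext_of_generate_finite _ hgen hpisys ?_ (by simp [measure_univ])
    rintro s ⟨Q, t, ht, rfl⟩
    simp only [Set.mem_univ_pi, Set.mem_setOf_eq] at ht
    have hQpi : MeasurableSet ((Q : Set H).pi t) :=
      MeasurableSet.pi Q.countable_toSet (fun i _ => ht i)
    have hset : ((Q : Set H).pi t) = {f : H → I | ∀ i ∈ Q, f i ∈ t i} := by
      ext f; simp [Set.mem_pi]
    rw [Measure.map_apply hmeas hQpi]
    have hpre : (fun (x : G → I) (h : H) => x (u h (b h⁻¹ z))) ⁻¹' ((Q : Set H).pi t)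
        = {x : G → I | ∀ g ∈ Q.image e, x g ∈ t (e.symm g)} := by
      ext x
      simp only [Set.mem_preimage, Set.mem_pi, Finset.mem_coe, Set.mem_setOf_eq,
        Finset.mem_image]
      constructor
      · rintro hx g ⟨h, hh, rfl⟩
        rw [e.symm_apply_apply]
        exact hx h hh
      · intro hx h hh
        have := hx (e h) ⟨h, hh, rfl⟩
        rw [e.symm_apply_apply] at this
        exact this
    rw [hpre, hμG.2 (Q.image e) (fun g => t (e.symm g))
      (fun g _ => ht (e.symm g)), hset, hμH.2 Q t (fun i _ => ht i)]
    rw [Finset.prod_image (fun h _ h' _ hhh => e.injective hhh)]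
    exact Finset.prod_congr rfl fun h _ => by rw [e.symm_apply_apply]
  · -- equivariance
    intro g x
    funext h
    simp only [bshift]
    set h' : H := (v g z)⁻¹ * h with hh'
    have hinv : h'⁻¹ = h⁻¹ * v g z := by rw [hh', mul_inv_rev, inv_inv]
    set w : Z := b h'⁻¹ z with hwdef
    have hw1 : b h⁻¹ (a g z) = w := by
      rw [← hv g z, ← hb_mul, hwdef, hinv]
    have hbw : b h w = a g z := by
      rw [hwdef, ← hb_mul, hinv, ← mul_assoc, mul_inv_cancel, one_mul, hv]
    have key : g⁻¹ * u h w = u h' w := by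
      refine ha_cancel _ _ w ?_
      rw [ha_mul, hu, hbw, ha_inv, hu, hwdef, ← hb_mul, mul_inv_cancel, hb_one]
    rw [hw1, key]
end
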